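/- For the binary case (T = 1, t = 0): if Pr(Y=1|D=1) > 0 and Pr(Y=1|D=0) > 0, then the probability of causation PC = Pr(Y(0)=0, Y(1)=1)/Pr(Y(1)=1) satisfies 1 − 1/RR ≤ PC ≤ Pr(Y=0|D=0)/Pr(Y=1|D=1), where RR = Pr(Y=1|D=1)/Pr(Y=1|D=0), and under no-confounding Pr(Y=y|D=d) = Pr(Y(d)=y). -/

import Mathlib

/-- Binary-outcome bounds (Dawid et al. 2016): under no confounding
(`Pr(Y=y|D=d) = Pr(Y(d)=y)`), `1 − 1/RR ≤ PC ≤ Pr(Y=0|D=0)/Pr(Y=1|D=1)`,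
where `y_pq = Pr(Y(0)=p, Y(1)=q)`, `PC = y₀₁ / Pr(Y(1)=1)`, and
`RR = Pr(Y=1|D=1)/Pr(Y=1|D=0)`. -/
theorem stmt3 (y00 y01 y10 y11 p0 p1 : ℝ)
    (h00 : 0 ≤ y00) (h01 : 0 ≤ y01) (h10 : 0 ≤ y10) (h11 : 0 ≤ y11)
    (hsum : y00 + y01 + y10 + y11 = 1)
    -- no confounding: Pr(Y=1|D=0) = Pr(Y(0)=1), Pr(Y=1|D=1) = Pr(Y(1)=1)
    (hp0 : p0 = y10 + y11) (hp1 : p1 = y01 + y11)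
    (hp0pos : 0 < p0) (hp1pos : 0 < p1) :
    1 - 1 / (p1 / p0) ≤ y01 / p1 ∧ y01 / p1 ≤ (1 - p0) / p1 := by
  rw [one_div_div]
  constructor
  · rw [sub_div' hp1pos.ne', div_le_div_iff₀ hp1pos hp1pos]
    nlinarith
  · rw [div_le_div_iff₀ hp1pos hp1pos]
    nlinarith
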